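/- If κ ≤ λ are infinite cardinals and I is an ideal on κ, then there exists a uniform ideal J on λ such that the quotient Boolean algebras P(κ)/I and P(λ)/J are isomorphic. Moreover, if I is δ-complete and there exists a δ-complete uniform ultrafilter on λ, then J can be taken to be δ-complete. -/

import Mathlib

open Cardinal

/-- An ideal on a set `X`. -/
structure SetIdeal (X : Type) where
  mem : Set X → Prop
  empty_mem : mem ∅
  mono : ∀ s t : Set X, s ⊆ t → mem t → mem s
  union_mem : ∀ s t : Set X, mem s → mem t → mem (s ∪ t)

/-- `δ`-completeness of an ideal. -/
def SetIdeal.Complete {X : Type} (I : SetIdeal X) (δ : Cardinal) : Prop :=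
  ∀ (ι : Type) (f : ι → Set X), #ι < δ → (∀ i, I.mem (f i)) → I.mem (⋃ i, f i)

/-- `F` witnesses an isomorphism of the quotient Boolean algebras `P(A)/I ≅ P(B)/J`:
it induces an order-embedding of the quotients (`[s] ≤ [t]` iff `[F s] ≤ [F t]`)
which is surjective modulo `J`. -/
def QuotIso {A B : Type} (I : SetIdeal A) (J : SetIdeal B) (F : Set A → Set B) : Prop :=
  (∀ s t : Set A, I.mem (s \ t) ↔ J.mem (F s \ F t)) ∧
  ∀ u : Set B, ∃ s : Set A, J.mem (symmDiff (F s) u)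

section Aux

variable {A B : Type} (I : SetIdeal A) (e : B ≃ A × B) (V : Ultrafilter B)

/-- The fiberwise fslice of a set `u ⊆ B` above `a ∈ A` (via the identification `B ≃ A × B`). -/
private def fslice (u : Set B) (a : A) : Set B := (fun b => e.symm (a, b)) ⁻¹' u

private lemma fslice_card_le (u : Set B) (a : A) : #↥(fslice e u a) ≤ #↥u := by
  apply Cardinal.mk_le_of_injective (f := fun b : fslice e u a => (⟨e.symm (a, b.1), b.2⟩ : u))
  intro x y h
  simp only [Subtype.mk.injEq] at h
  have := e.symm.injective (congrArg Subtype.val h)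
  exact Subtype.ext (congrArg Prod.snd (Prod.mk.injEq .. ▸ this : (a, x.1) = (a, y.1)))

/-- The transferred ideal on `B`. -/
private def transJ : SetIdeal B where
  mem u := I.mem {a | fslice e u a ∈ V}
  empty_mem := by
    have h : {a : A | fslice e (∅ : Set B) a ∈ V} = ∅ := by
      ext a; simp [fslice, Filter.empty_notMem]
    simpa [h] using I.empty_mem
  mono s t hst ht := by
    refine I.mono _ _ ?_ ht
    intro a ha
    exact Filter.mem_of_superset ha fun b hb => hst hb
  union_mem s t hs ht := by
    refine I.mono _ _ ?_ (I.union_mem _ _ hs ht)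
    intro a ha
    have : fslice e (s ∪ t) a = fslice e s a ∪ fslice e t a := rfl
    rw [Set.mem_setOf_eq, this, Ultrafilter.union_mem_iff] at ha
    exact ha.imp (fun h => h) (fun h => h)

private lemma transJ_uniform (hV : ∀ s ∈ V, ¬ (#↥s < #B)) :
    ∀ s : Set B, #↥s < #B → (transJ I e V).mem s := by
  intro s hs
  have h : {a : A | fslice e s a ∈ V} = ∅ := by
    ext a
    simp only [Set.mem_setOf_eq, Set.mem_empty_iff_false, iff_false]
    intro hm
    exact hV _ hm (lt_of_le_of_lt (fslice_card_le e s a) hs)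
  show I.mem {a | fslice e s a ∈ V}
  rw [h]; exact I.empty_mem

private lemma transJ_complete (δ : Cardinal) (hI : I.Complete δ)
    (hU : ∀ (ι : Type) (f : ι → Set B), #ι < δ → (∀ i, f i ∈ V) → (⋂ i, f i) ∈ V) :
    (transJ I e V).Complete δ := by
  intro ι f hι hf
  show I.mem {a | fslice e (⋃ i, f i) a ∈ V}
  refine I.mono _ _ ?_ (hI ι (fun i => {a | fslice e (f i) a ∈ V}) hι hf)
  intro a ha
  by_contra h
  simp only [Set.mem_iUnion, Set.mem_setOf_eq, not_exists] at h
  have hmem : (⋂ i, (fslice e (f i) a)ᶜ) ∈ V :=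
    hU ι _ hι fun i => (Ultrafilter.compl_mem_iff_notMem).2 (h i)
  rw [← Set.compl_iUnion] at hmem
  have h2 : fslice e (⋃ i, f i) a = ⋃ i, fslice e (f i) a := by
    simp [fslice, Set.preimage_iUnion]
  rw [Set.mem_setOf_eq, h2] at ha
  exact (Ultrafilter.compl_mem_iff_notMem.1 hmem) ha

private lemma transJ_quotIso :
    ∃ F : Set A → Set B, QuotIso I (transJ I e V) F := by
  classical
  refine ⟨fun s => {b | (e b).1 ∈ s}, ?_, ?_⟩
  · intro s t
    have h : {a : A | fslice e ({b | (e b).1 ∈ s} \ {b | (e b).1 ∈ t}) a ∈ V} = s \ t := by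
      ext a
      have hd : fslice e ({b | (e b).1 ∈ s} \ {b | (e b).1 ∈ t}) a
          = fslice e {b | (e b).1 ∈ s} a \ fslice e {b | (e b).1 ∈ t} a := rfl
      have hs' : ∀ (w : Set A), fslice e {b | (e b).1 ∈ w} a
          = if a ∈ w then (Set.univ : Set B) else ∅ := by
        intro w
        ext b
        by_cases hw : a ∈ w <;> simp [fslice, hw]
      rw [Set.mem_setOf_eq, hd, hs' s, hs' t]
      by_cases hs : a ∈ s <;> by_cases ht : a ∈ t <;>
        simp [hs, ht, Filter.univ_mem, Filter.empty_notMem, Set.mem_diff,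
          Set.diff_empty, Set.diff_self, Set.empty_diff, Ultrafilter.mem_coe];
        exact Filter.univ_mem
    show I.mem (s \ t) ↔ I.mem {a | _ ∈ V}
    rw [h]
  · intro u
    set S : Set A := {a | fslice e u a ∈ V} with hS
    refine ⟨S, ?_⟩
    have h : {a : A | fslice e (symmDiff {b | (e b).1 ∈ S} u) a ∈ V} = ∅ := by
      ext a
      simp only [Set.mem_setOf_eq, Set.mem_empty_iff_false, iff_false]
      have hd : fslice e (symmDiff {b | (e b).1 ∈ S} u) a
          = if a ∈ S then (fslice e u a)ᶜ else fslice e u a := by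
        ext b
        by_cases ha : a ∈ S <;>
          simp [fslice, Set.mem_symmDiff, ha]
      rw [hd]
      by_cases ha : a ∈ S
      · rw [if_pos ha]
        exact fun hc => (Ultrafilter.compl_mem_iff_notMem.1 hc) ha
      · rw [if_neg ha]
        exact ha
    show I.mem {a | fslice e (symmDiff {b | (e b).1 ∈ S} u) a ∈ V}
    rw [h]; exact I.empty_mem

end Aux

theorem stmt11 (κ lam : Cardinal.{0}) (hκ : ℵ₀ ≤ κ) (hκlam : κ ≤ lam)
    (A B : Type) (hA : #A = κ) (hB : #B = lam)
    (I : SetIdeal A) :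
    (∃ J : SetIdeal B, (∀ s : Set B, #↥s < lam → J.mem s) ∧
        ∃ F : Set A → Set B, QuotIso I J F) ∧
    (∀ δ : Cardinal, I.Complete δ →
      (∃ U : Ultrafilter B, (∀ s ∈ U, #↥s = lam) ∧
        ∀ (ι : Type) (f : ι → Set B), #ι < δ → (∀ i, f i ∈ U) → (⋂ i, f i) ∈ U) →
      ∃ J : SetIdeal B, (∀ s : Set B, #↥s < lam → J.mem s) ∧ J.Complete δ ∧
        ∃ F : Set A → Set B, QuotIso I J F) := by
  have hBlam : #B = lam := hB
  have hBinf : ℵ₀ ≤ #B := by rw [hB]; exact hκ.trans hκlam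
  have hcard : #(A × B) = #B := by
    rw [Cardinal.mk_prod, Cardinal.lift_id, Cardinal.lift_id, hA, hB]
    exact Cardinal.mul_eq_right (hκ.trans hκlam) hκlam (Cardinal.aleph0_pos.trans_le hκ).ne'
  obtain ⟨e⟩ : Nonempty (B ≃ A × B) := Cardinal.eq.mp hcard.symm
  constructor
  · -- get a uniform ultrafilter on B
    obtain ⟨V, hV⟩ : ∃ V : Ultrafilter B, ∀ s ∈ V, ¬ (#↥s < #B) := by
      let L : Filter B :=
        { sets := {s | #↥(sᶜ : Set B) < #B}
          univ_sets := by
            simpa using aleph0_pos.trans_le hBinf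
          sets_of_superset := fun hs hsub =>
            lt_of_le_of_lt (Cardinal.mk_le_mk_of_subset (Set.compl_subset_compl.2 hsub)) hs
          inter_sets := fun {s t} hs ht => by
            simp only [Set.mem_setOf_eq, Set.compl_inter]
            exact lt_of_le_of_lt (Cardinal.mk_union_le _ _)
              (Cardinal.add_lt_of_lt hBinf hs ht) }
      have hmemL : ∀ s : Set B, s ∈ L ↔ #↥(sᶜ : Set B) < #B := fun s => Iff.rfl
      have hne : Filter.NeBot L := by
        constructor
        intro hbot
        have h0 : (∅ : Set B) ∈ L := by rw [hbot]; trivial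
        rw [hmemL, Set.compl_empty, Cardinal.mk_univ] at h0
        exact absurd h0 (lt_irrefl _)
      refine ⟨Ultrafilter.of L, ?_⟩
      intro s hs hlt
      have : sᶜ ∈ L := by rw [hmemL, compl_compl]; exact hlt
      have hc : sᶜ ∈ Ultrafilter.of L := Ultrafilter.of_le L this
      exact (Ultrafilter.compl_mem_iff_notMem.1 hc) hs
    refine ⟨transJ I e V, fun s hs => transJ_uniform I e V hV s (by rwa [hBlam]), transJ_quotIso I e V⟩
  · rintro δ hI ⟨U, hU1, hU2⟩
    have hV : ∀ s ∈ U, ¬ (#↥s < #B) := fun s hs => by rw [hU1 s hs, hBlam]; exact lt_irrefl _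
    exact ⟨transJ I e U, fun s hs => transJ_uniform I e U hV s (by rwa [hBlam]),
      transJ_complete I e U δ hI hU2, transJ_quotIso I e U⟩
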